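/- Let Y, Y' be square-integrable random variables, X a random vector, Z a random variable, Ŷ_{X,Z} = E[Y' | X, Z] and Ŷ_X = E[Y' | X]. If Cov(Ŷ_{X,Z}, Y | X) ≤ 0 almost surely and E[Var(Ŷ_{X,Z} | X)] > 0, then E[(Ŷ_X − Y)²] < E[(Ŷ_{X,Z} − Y)²], i.e., the simple estimator strictly outperforms the complex estimator in mean squared error on the true label Y. -/

import Mathlib

open MeasureTheory ProbabilityTheory

private lemma integrable_mul_of_memLp_two {Ω : Type*} {m0 : MeasurableSpace Ω}
    {μ : Measure Ω} {f g : Ω → ℝ} (hf : MemLp f 2 μ) (hg : MemLp g 2 μ) :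
    Integrable (fun ω => f ω * g ω) μ := by
  have h : Integrable (fun ω => (((f ω + g ω) ^ 2 - f ω ^ 2) - g ω ^ 2) / 2) μ :=
    (((hf.add hg).integrable_sq.sub hf.integrable_sq).sub hg.integrable_sq).div_const 2
  exact h.congr (Filter.Eventually.of_forall fun ω => by ring)

private lemma memLp_two_condexp {Ω : Type*} {m m0 : MeasurableSpace Ω} (hm : m ≤ m0)
    {μ : Measure Ω} [IsFiniteMeasure μ] {f : Ω → ℝ} (hf : MemLp f 2 μ) :
    MemLp (μ[f|m]) 2 μ := by
  have hae : (condExpL2 ℝ ℝ hm (hf.toLp f) : Ω → ℝ) =ᵐ[μ] μ[f|m] := by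
    refine ae_eq_condExp_of_forall_setIntegral_eq hm (hf.integrable one_le_two)
      (fun s _ hμs => integrableOn_condExpL2_of_measure_ne_top hm hμs.ne _)
      (fun s hs hμs => ?_) (aestronglyMeasurable_condExpL2 hm _)
    rw [integral_condExpL2_eq hm (hf.toLp f) hs hμs.ne]
    exact setIntegral_congr_ae (hm s hs) ((hf.coeFn_toLp).mono fun ω hω _ => hω)
  exact (Lp.memLp _).ae_eq hae

/-- Under the nonpositive conditional covariance condition,
if additionally `E[Var(Ŷ_{X,Z} | X)] > 0`, then the simple estimator strictly
outperforms the complex estimator in MSE on the true label `Y`. -/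
theorem simple_beats_complex_strict
    {Ω : Type*} {m0 : MeasurableSpace Ω} (μ : Measure Ω) [IsProbabilityMeasure μ]
    (mX mXZ : MeasurableSpace Ω) (h1 : mX ≤ mXZ) (h2 : mXZ ≤ m0)
    (Y Y' : Ω → ℝ) (hY : MemLp Y 2 μ) (hY' : MemLp Y' 2 μ)
    (hcov : ∀ᵐ ω ∂μ,
      (μ[fun ω' => (μ[Y'|mXZ]) ω' * Y ω' | mX]) ω
        - (μ[(μ[Y'|mXZ]) | mX]) ω * (μ[Y|mX]) ω ≤ 0)
    (hvar : 0 < ∫ ω, ((μ[fun ω' => ((μ[Y'|mXZ]) ω') ^ 2 | mX]) ω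
        - ((μ[(μ[Y'|mXZ]) | mX]) ω) ^ 2) ∂μ) :
    ∫ ω, ((μ[Y'|mX]) ω - Y ω) ^ 2 ∂μ < ∫ ω, ((μ[Y'|mXZ]) ω - Y ω) ^ 2 ∂μ := by
  have hm0 : mX ≤ m0 := h1.trans h2
  set A := μ[Y'|mXZ] with hA
  set B := μ[Y'|mX] with hB
  have hA2 : MemLp A 2 μ := memLp_two_condexp h2 hY'
  have hB2 : MemLp B 2 μ := memLp_two_condexp hm0 hY'
  have hCY2 : MemLp (μ[Y|mX]) 2 μ := memLp_two_condexp hm0 hY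
  have hBeq : μ[A|mX] =ᵐ[μ] B := condExp_condExp_of_le h1 h2
  have hAY : Integrable (fun ω => A ω * Y ω) μ := integrable_mul_of_memLp_two hA2 hY
  have hBY : Integrable (fun ω => B ω * Y ω) μ := integrable_mul_of_memLp_two hB2 hY
  have hBCY : Integrable (fun ω => B ω * (μ[Y|mX]) ω) μ :=
    integrable_mul_of_memLp_two hB2 hCY2
  have hA_sq : Integrable (fun ω => A ω ^ 2) μ := hA2.integrable_sq
  have hB_sq : Integrable (fun ω => B ω ^ 2) μ := hB2.integrable_sq
  have hY_sq : Integrable (fun ω => Y ω ^ 2) μ := hY.integrable_sq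
  -- the squared conditional expectation term
  have hsq_ae : (fun ω => ((μ[A|mX]) ω) ^ 2) =ᵐ[μ] fun ω => B ω ^ 2 :=
    hBeq.mono fun ω hω => by simp only [hω]
  have hsq_int : Integrable (fun ω => ((μ[A|mX]) ω) ^ 2) μ := hB_sq.congr hsq_ae.symm
  -- Step 2 : ∫ B² < ∫ A²
  have hvar' : ∫ ω, B ω ^ 2 ∂μ < ∫ ω, A ω ^ 2 ∂μ := by
    have hsplit : ∫ ω, ((μ[fun ω' => (A ω') ^ 2|mX]) ω - ((μ[A|mX]) ω) ^ 2) ∂μ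
        = ∫ ω, (μ[fun ω' => (A ω') ^ 2|mX]) ω ∂μ - ∫ ω, ((μ[A|mX]) ω) ^ 2 ∂μ :=
      integral_sub integrable_condExp hsq_int
    have h1' : ∫ ω, (μ[fun ω' => (A ω') ^ 2|mX]) ω ∂μ = ∫ ω, A ω ^ 2 ∂μ :=
      integral_condExp hm0
    have h2' : ∫ ω, ((μ[A|mX]) ω) ^ 2 ∂μ = ∫ ω, B ω ^ 2 ∂μ := integral_congr_ae hsq_ae
    rw [hsplit, h1', h2'] at hvar
    linarith
  -- Step 3 : ∫ A·Y ≤ ∫ B·Y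
  have hcov' : ∫ ω, A ω * Y ω ∂μ ≤ ∫ ω, B ω * Y ω ∂μ := by
    have hprod_ae : (fun ω => (μ[A|mX]) ω * (μ[Y|mX]) ω)
        =ᵐ[μ] fun ω => B ω * (μ[Y|mX]) ω :=
      hBeq.mono fun ω hω => by simp only [hω]
    have hprod_int : Integrable (fun ω => (μ[A|mX]) ω * (μ[Y|mX]) ω) μ :=
      hBCY.congr hprod_ae.symm
    have hle : ∫ ω, ((μ[fun ω' => A ω' * Y ω'|mX]) ω - (μ[A|mX]) ω * (μ[Y|mX]) ω) ∂μ ≤ 0 :=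
      integral_nonpos_of_ae hcov
    rw [integral_sub integrable_condExp hprod_int, integral_condExp hm0,
      integral_congr_ae hprod_ae] at hle
    -- ∫ B·E[Y|X] = ∫ B·Y
    have hpull : μ[fun ω => B ω * Y ω|mX] =ᵐ[μ] fun ω => B ω * (μ[Y|mX]) ω := by
      have := condExp_mul_of_stronglyMeasurable_left (f := B) (g := Y)
        stronglyMeasurable_condExp (by exact hBY) (hY.integrable one_le_two)
      exact this
    have heqBY : ∫ ω, B ω * (μ[Y|mX]) ω ∂μ = ∫ ω, B ω * Y ω ∂μ := by
      rw [← integral_congr_ae hpull, integral_condExp hm0]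
    linarith
  -- Step 1 : expand the two MSEs
  have expandB : ∫ ω, (B ω - Y ω) ^ 2 ∂μ
      = ∫ ω, B ω ^ 2 ∂μ - 2 * ∫ ω, B ω * Y ω ∂μ + ∫ ω, Y ω ^ 2 ∂μ := by
    have h : ∀ ω, (B ω - Y ω) ^ 2 = (B ω ^ 2 - 2 * (B ω * Y ω)) + Y ω ^ 2 :=
      fun ω => by ring
    have hs1 : Integrable (fun ω => B ω ^ 2 - 2 * (B ω * Y ω)) μ := by
      exact hB_sq.sub (hBY.const_mul 2)
    have hs2 : Integrable (fun ω => 2 * (B ω * Y ω)) μ := by exact hBY.const_mul 2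
    simp_rw [h]
    rw [integral_add hs1 hY_sq, integral_sub hB_sq hs2, integral_const_mul 2 _]
  have expandA : ∫ ω, (A ω - Y ω) ^ 2 ∂μ
      = ∫ ω, A ω ^ 2 ∂μ - 2 * ∫ ω, A ω * Y ω ∂μ + ∫ ω, Y ω ^ 2 ∂μ := by
    have h : ∀ ω, (A ω - Y ω) ^ 2 = (A ω ^ 2 - 2 * (A ω * Y ω)) + Y ω ^ 2 :=
      fun ω => by ring
    have hs1 : Integrable (fun ω => A ω ^ 2 - 2 * (A ω * Y ω)) μ := by
      exact hA_sq.sub (hAY.const_mul 2)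
    have hs2 : Integrable (fun ω => 2 * (A ω * Y ω)) μ := by exact hAY.const_mul 2
    simp_rw [h]
    rw [integral_add hs1 hY_sq, integral_sub hA_sq hs2, integral_const_mul 2 _]
  rw [expandA, expandB]
  linarith
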